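/- Exponential product identity for quadratic Fock-space forms: for self-adjoint operators A, B bounded from above on the one-particle space, there is a self-adjoint C with e^A e^B e^A = e^C, and the second-quantized exponentials satisfy e^{d\Gamma(A)} e^{d\Gamma(B)} e^{d\Gamma(A)} = e^{d\Gamma(C)} on both bosonic and fermionic Fock space. -/

import Mathlib

open NormedSpace


open NormedSpace

section Aux

variable {E : Type*} [NormedRing E] [NormedAlgebra ℂ E] [CompleteSpace E]

/-- The inner derivation `S ↦ D * S - S * D` as a continuous linear map. -/
noncomputable def fockAdop (D : E) : E →L[ℂ] E :=
  ContinuousLinearMap.mul ℂ E D - (ContinuousLinearMap.mul ℂ E).flip D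

lemma fockAdop_apply (D S : E) : fockAdop D S = D * S - S * D := rfl

lemma fock_exp_mulLeft (D : E) :
    exp (ContinuousLinearMap.mul ℂ E D) = ContinuousLinearMap.mul ℂ E (exp D) := by
  have hpow : ∀ k : ℕ, (ContinuousLinearMap.mul ℂ E D) ^ k
      = ContinuousLinearMap.mul ℂ E (D ^ k) := by
    intro k
    induction k with
    | zero => ext x; simp
    | succ n ih => rw [pow_succ, pow_succ, ih]; ext x; simp [mul_assoc]
  rw [exp_eq_tsum ℂ, exp_eq_tsum ℂ]
  simp_rw [hpow]
  calc ∑' (n : ℕ), ((n.factorial : ℂ))⁻¹ • (ContinuousLinearMap.mul ℂ E) (D ^ n)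
      = ∑' (n : ℕ), (ContinuousLinearMap.mul ℂ E) (((n.factorial : ℂ))⁻¹ • D ^ n) :=
        tsum_congr fun n => (map_smul _ _ _).symm
    _ = _ := (ContinuousLinearMap.map_tsum (ContinuousLinearMap.mul ℂ E)
        (expSeries_summable' (𝕂 := ℂ) D)).symm

lemma fock_exp_mulRight (D : E) :
    exp ((ContinuousLinearMap.mul ℂ E).flip D)
      = (ContinuousLinearMap.mul ℂ E).flip (exp D) := by
  have hpow : ∀ k : ℕ, ((ContinuousLinearMap.mul ℂ E).flip D) ^ k
      = (ContinuousLinearMap.mul ℂ E).flip (D ^ k) := by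
    intro k
    induction k with
    | zero => ext x; simp
    | succ n ih => rw [pow_succ, pow_succ', ih]; ext x; simp [mul_assoc]
  rw [exp_eq_tsum ℂ, exp_eq_tsum ℂ]
  simp_rw [hpow]
  calc ∑' (n : ℕ), ((n.factorial : ℂ))⁻¹ • (ContinuousLinearMap.mul ℂ E).flip (D ^ n)
      = ∑' (n : ℕ), ((ContinuousLinearMap.mul ℂ E).flip) (((n.factorial : ℂ))⁻¹ • D ^ n) :=
        tsum_congr fun n => (map_smul _ _ _).symm
    _ = _ := (ContinuousLinearMap.map_tsum ((ContinuousLinearMap.mul ℂ E).flip)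
        (expSeries_summable' (𝕂 := ℂ) D)).symm

lemma fock_exp_adop (D S : E) :
    exp (fockAdop D) S = exp D * S * exp (-D) := by
  have hcomm : Commute (ContinuousLinearMap.mul ℂ E D)
      (-(ContinuousLinearMap.mul ℂ E).flip D) := by
    apply Commute.neg_right
    ext x
    simp [mul_assoc]
  have h1 : fockAdop D = ContinuousLinearMap.mul ℂ E D
      + -(ContinuousLinearMap.mul ℂ E).flip D := by
    rw [fockAdop, sub_eq_add_neg]
  letI : NormedAlgebra ℚ (E →L[ℂ] E) := NormedAlgebra.restrictScalars ℚ ℂ (E →L[ℂ] E)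
  rw [h1, exp_add_of_commute hcomm, fock_exp_mulLeft]
  have h2 : exp (-(ContinuousLinearMap.mul ℂ E).flip D)
      = (ContinuousLinearMap.mul ℂ E).flip (exp (-D)) := by
    rw [← fock_exp_mulRight]; congr 1; simp
  rw [h2]
  simp [mul_assoc]

lemma fock_summable_adop (D S : E) :
    Summable fun k : ℕ => ((k.factorial : ℂ))⁻¹ • (((fockAdop D) ^ k) S) := by
  have h := expSeries_summable' (𝕂 := ℂ) (fockAdop D)
  have h2 := (ContinuousLinearMap.apply ℂ E S).summable h
  refine h2.congr fun k => ?_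
  simp

lemma fock_exp_conj_eq_tsum (D S : E) :
    exp D * S * exp (-D) = ∑' k : ℕ, ((k.factorial : ℂ))⁻¹ • (((fockAdop D) ^ k) S) := by
  rw [← fock_exp_adop]
  have h := expSeries_summable' (𝕂 := ℂ) (fockAdop D)
  have h3 : exp (fockAdop D) S = (ContinuousLinearMap.apply ℂ E S)
      (∑' (n : ℕ), ((n.factorial : ℂ))⁻¹ • (fockAdop D) ^ n) := by
    simp only [exp_eq_tsum ℂ]; rfl
  rw [h3, ContinuousLinearMap.map_tsum (ContinuousLinearMap.apply ℂ E S) h]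
  exact tsum_congr fun k => by simp

end Aux

section Fock

variable {H : Type*} [NormedAddCommGroup H] [InnerProductSpace ℂ H] [CompleteSpace H]
variable {F : Type*} [NormedAddCommGroup F] [InnerProductSpace ℂ F] [CompleteSpace F]
variable (crea : H →ₗ[ℂ] (F →L[ℂ] F)) (dΓ : (H →L[ℂ] H) →ₗ[ℂ] (F →L[ℂ] F))

/-- Absorption lemma: along a suitable subsequence of any null sequence,
the (possibly unbounded) linear map `crea` still tends to zero. -/
lemma fock_absorb
    (hcomm : ∀ (X : H →L[ℂ] H) (f : H), dΓ X * crea f - crea f * dΓ X = crea (X f))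
    (u : ℕ → H) (hu : Filter.Tendsto u Filter.atTop (nhds 0)) :
    ∃ φ : ℕ → ℕ, StrictMono φ ∧
      Filter.Tendsto (fun j => crea (u (φ j))) Filter.atTop (nhds 0) := by
  by_cases hfd : FiniteDimensional ℂ H
  · refine ⟨id, strictMono_id, ?_⟩
    have hc : Continuous crea := LinearMap.continuous_of_finiteDimensional crea
    have := (hc.tendsto 0).comp hu
    rw [map_zero] at this
    exact this
  · -- infinite dimensional case: pick an orthonormal sequence
    obtain ⟨w, b, hb⟩ := exists_hilbertBasis ℂ H
    have hwinf : w.Infinite := by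
      intro hwfin
      apply hfd
      have hdense : Dense (Submodule.span ℂ w : Set H) := by
        rw [Submodule.dense_iff_topologicalClosure_eq_top]
        have := b.dense_span
        rwa [hb, Subtype.range_coe] at this
      have hfin : FiniteDimensional ℂ (Submodule.span ℂ w) :=
        FiniteDimensional.span_of_finite ℂ hwfin
      have hclosed : IsClosed (Submodule.span ℂ w : Set H) :=
        Submodule.closed_of_finiteDimensional _
      have htop : Submodule.span ℂ w = ⊤ := by
        have hset : (Submodule.span ℂ w : Set H) = Set.univ := by
          rw [← hdense.closure_eq, hclosed.closure_eq]
        rw [Submodule.eq_top_iff']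
        intro x
        have : x ∈ (Submodule.span ℂ w : Set H) := hset ▸ Set.mem_univ x
        exact this
      have : FiniteDimensional ℂ (⊤ : Submodule ℂ H) := htop ▸ hfin
      exact Submodule.topEquiv.finiteDimensional
    -- orthonormal sequence
    have emb := hwinf.natEmbedding
    set e : ℕ → H := fun n => (emb n : H) with he
    have horth : Orthonormal ℂ e := by
      have h1 : Orthonormal ℂ (Subtype.val : w → H) := by
        have := b.orthonormal
        rwa [hb] at this
      exact h1.comp emb emb.injective
    have hnorm_e : ∀ n, ‖e n‖ = 1 := fun n => horth.1 n
    -- constants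
    set c : ℕ → ℝ := fun j => max 1 ‖crea (e j)‖ with hc
    have hc1 : ∀ j, (1:ℝ) ≤ c j := fun j => le_max_left _ _
    have hcpos : ∀ j, (0:ℝ) < c j := fun j => lt_of_lt_of_le one_pos (hc1 j)
    have hcnorm : ∀ j, ‖crea (e j)‖ ≤ c j := fun j => le_max_right _ _
    -- choose the subsequence
    have hsel : ∀ j m : ℕ, ∃ n, m < n ∧ ‖u n‖ ≤ (4:ℝ)⁻¹ ^ j / c j := by
      intro j m
      have hε : (0:ℝ) < (4:ℝ)⁻¹ ^ j / c j := by positivity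
      have := Filter.Tendsto.eventually hu (Metric.ball_mem_nhds (0:H) hε)
      rw [Filter.eventually_atTop] at this
      obtain ⟨N, hN⟩ := this
      refine ⟨max (m+1) N, lt_of_lt_of_le (Nat.lt_succ_self m) (le_max_left _ _), ?_⟩
      have := hN (max (m+1) N) (le_max_right _ _)
      simp only [Metric.mem_ball, dist_zero_right] at this
      exact this.le
    choose g hg1 hg2 using hsel
    set φ : ℕ → ℕ := fun j => Nat.rec (g 0 0) (fun j prev => g (j+1) prev) j with hφ
    have hφsucc : ∀ j, φ (j+1) = g (j+1) (φ j) := fun j => rfl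
    have hφmono : StrictMono φ := by
      apply strictMono_nat_of_lt_succ
      intro j
      rw [hφsucc]
      exact hg1 (j+1) (φ j)
    have hφbound : ∀ j, ‖u (φ j)‖ ≤ (4:ℝ)⁻¹ ^ j / c j := by
      intro j
      cases j with
      | zero => exact hg2 0 0
      | succ n => rw [hφsucc]; exact hg2 (n+1) (φ n)
    refine ⟨φ, hφmono, ?_⟩
    -- the absorbing operator
    set R : ℕ → (H →L[ℂ] H) := fun j =>
      ((c j * 2 ^ j : ℝ) : ℂ) • ((innerSL ℂ (e j)).smulRight (u (φ j))) with hR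
    have hRnorm : ∀ j, ‖R j‖ ≤ (2:ℝ)⁻¹ ^ j := by
      intro j
      rw [hR]
      simp only [norm_smul, ContinuousLinearMap.norm_smulRight_apply, innerSL_apply_norm]
      rw [hnorm_e]
      have h1 : ‖((c j * 2 ^ j : ℝ) : ℂ)‖ = c j * 2 ^ j := by
        rw [Complex.norm_real, Real.norm_eq_abs, abs_of_pos (by positivity)]
      rw [h1, one_mul]
      calc c j * 2 ^ j * ‖u (φ j)‖ ≤ c j * 2 ^ j * ((4:ℝ)⁻¹ ^ j / c j) := by
            apply mul_le_mul_of_nonneg_left (hφbound j) (by positivity)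
        _ = (2:ℝ) ^ j * (4:ℝ)⁻¹ ^ j := by field_simp; exact mul_inv_cancel₀ (hcpos j).ne'
        _ = (2:ℝ)⁻¹ ^ j := by
            rw [← mul_pow]
            norm_num
    have hRsum : Summable R := by
      apply Summable.of_norm_bounded ?_ hRnorm
      exact summable_geometric_of_lt_one (by norm_num) (by norm_num)
    set Y : H →L[ℂ] H := ∑' j, R j with hY
    have hYe : ∀ i, Y (e i) = ((c i * 2 ^ i : ℝ) : ℂ) • u (φ i) := by
      intro i
      have h0 : Y (e i) = (ContinuousLinearMap.apply ℂ H (e i)) (∑' j, R j) := by rw [hY]; rfl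
      rw [h0, ContinuousLinearMap.map_tsum (ContinuousLinearMap.apply ℂ H (e i)) hRsum]
      have : ∀ j, (ContinuousLinearMap.apply ℂ H (e i)) (R j)
          = if j = i then ((c i * 2 ^ i : ℝ) : ℂ) • u (φ i) else 0 := by
        intro j
        simp only [ContinuousLinearMap.apply_apply, hR, ContinuousLinearMap.smul_apply,
          ContinuousLinearMap.smulRight_apply, innerSL_apply_apply]
        rw [orthonormal_iff_ite.mp horth j i]
        by_cases hji : j = i
        · subst hji; simp
        · simp [hji]
      rw [tsum_congr this, tsum_eq_single i (fun j hj => by simp [hj])]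
      simp
    -- the norm estimate
    have hkey : ∀ j, ‖crea (u (φ j))‖ ≤ 2 * ‖dΓ Y‖ * (2:ℝ)⁻¹ ^ j := by
      intro j
      have hγ : (((c j * 2 ^ j : ℝ) : ℂ)) ≠ 0 := by
        simp only [ne_eq, Complex.ofReal_eq_zero]
        positivity
      have h1 : crea (u (φ j)) = (((c j * 2 ^ j : ℝ) : ℂ))⁻¹ • crea (Y (e j)) := by
        rw [hYe j, map_smul, smul_smul, inv_mul_cancel₀ hγ, one_smul]
      rw [h1, ← hcomm Y (e j)]
      rw [norm_smul]
      have h2 : ‖(((c j * 2 ^ j : ℝ) : ℂ))⁻¹‖ = (c j * 2 ^ j)⁻¹ := by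
        rw [norm_inv, Complex.norm_real, Real.norm_eq_abs, abs_of_pos (by positivity)]
      rw [h2]
      have h3 : ‖dΓ Y * crea (e j) - crea (e j) * dΓ Y‖ ≤ 2 * ‖dΓ Y‖ * c j := by
        calc ‖dΓ Y * crea (e j) - crea (e j) * dΓ Y‖
            ≤ ‖dΓ Y * crea (e j)‖ + ‖crea (e j) * dΓ Y‖ := norm_sub_le _ _
          _ ≤ ‖dΓ Y‖ * ‖crea (e j)‖ + ‖crea (e j)‖ * ‖dΓ Y‖ := by
              gcongr <;> exact norm_mul_le _ _
          _ = 2 * ‖dΓ Y‖ * ‖crea (e j)‖ := by ring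
          _ ≤ 2 * ‖dΓ Y‖ * c j := by
              apply mul_le_mul_of_nonneg_left (hcnorm j) (by positivity)
      calc (c j * 2 ^ j)⁻¹ * ‖dΓ Y * crea (e j) - crea (e j) * dΓ Y‖
          ≤ (c j * 2 ^ j)⁻¹ * (2 * ‖dΓ Y‖ * c j) := by
            apply mul_le_mul_of_nonneg_left h3 (by positivity)
        _ = 2 * ‖dΓ Y‖ * ((2:ℝ) ^ j)⁻¹ * (c j * (c j)⁻¹) := by
            rw [mul_inv]; ring
        _ = 2 * ‖dΓ Y‖ * (2:ℝ)⁻¹ ^ j := by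
            rw [mul_inv_cancel₀ (ne_of_gt (hcpos j)), mul_one, inv_pow]
    -- conclude
    apply squeeze_zero_norm hkey
    have : Filter.Tendsto (fun j : ℕ => (2:ℝ)⁻¹ ^ j) Filter.atTop (nhds 0) :=
      tendsto_pow_atTop_nhds_zero_of_lt_one (by norm_num) (by norm_num)
    have h4 := this.const_mul (2 * ‖dΓ Y‖)
    simpa using h4


end Fock

section Fock2
variable {H : Type*} [NormedAddCommGroup H] [InnerProductSpace ℂ H] [CompleteSpace H]
variable {F : Type*} [NormedAddCommGroup F] [InnerProductSpace ℂ F] [CompleteSpace F]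
variable (crea : H →ₗ[ℂ] (F →L[ℂ] F)) (dΓ : (H →L[ℂ] H) →ₗ[ℂ] (F →L[ℂ] F))

lemma fock_adpow
    (hcomm : ∀ (X : H →L[ℂ] H) (f : H), dΓ X * crea f - crea f * dΓ X = crea (X f))
    (X : H →L[ℂ] H) (k : ℕ) (f : H) :
    ((fockAdop (dΓ X)) ^ k) (crea f) = crea ((X ^ k) f) := by
  induction k generalizing f with
  | zero => simp
  | succ n ih =>
    have h1 : ((fockAdop (dΓ X)) ^ (n+1)) (crea f)
        = ((fockAdop (dΓ X)) ^ n) (fockAdop (dΓ X) (crea f)) := by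
      rw [pow_succ]
      rfl
    rw [h1, fockAdop_apply, hcomm X f, ih (X f)]
    congr 1

lemma fock_crea_exp
    (hcomm : ∀ (X : H →L[ℂ] H) (f : H), dΓ X * crea f - crea f * dΓ X = crea (X f))
    (X : H →L[ℂ] H) (f : H) :
    exp (dΓ X) * crea f * exp (-(dΓ X)) = crea (exp X f) := by
  have hconj := fock_exp_conj_eq_tsum (dΓ X) (crea f)
  simp_rw [fock_adpow crea dΓ hcomm X _ f] at hconj
  -- summability of the series of creation operators
  have hS : Summable fun k : ℕ => ((k.factorial : ℂ))⁻¹ • crea ((X ^ k) f) := by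
    have := fock_summable_adop (dΓ X) (crea f)
    refine this.congr fun k => ?_
    rw [fock_adpow crea dΓ hcomm X k f]
  set S : F →L[ℂ] F := ∑' k : ℕ, ((k.factorial : ℂ))⁻¹ • crea ((X ^ k) f) with hSdef
  rw [hconj]
  -- the H-valued tails
  set u : ℕ → H := fun K => exp X f
    - (∑ k ∈ Finset.range K, ((k.factorial : ℂ))⁻¹ • X ^ k) f with hu
  have hu0 : Filter.Tendsto u Filter.atTop (nhds 0) := by
    have h1 : Filter.Tendsto (fun K => ∑ k ∈ Finset.range K, ((k.factorial : ℂ))⁻¹ • X ^ k)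
        Filter.atTop (nhds (exp X)) := by
      have := (expSeries_summable' (𝕂 := ℂ) X).hasSum.tendsto_sum_nat
      rwa [exp_eq_tsum ℂ]
    have h2 : Filter.Tendsto
        (fun K => (∑ k ∈ Finset.range K, ((k.factorial : ℂ))⁻¹ • X ^ k) f)
        Filter.atTop (nhds (exp X f)) :=
      ((ContinuousLinearMap.apply ℂ H f).continuous.tendsto _).comp h1
    have h3 := (tendsto_const_nhds (x := exp X f) (f := Filter.atTop (α := ℕ))).sub h2
    rw [sub_self] at h3
    exact h3
  -- crea of the tails
  have hcu : ∀ K, crea (u K) = crea (exp X f)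
      - ∑ k ∈ Finset.range K, ((k.factorial : ℂ))⁻¹ • crea ((X ^ k) f) := by
    intro K
    rw [hu]
    simp only [map_sub]
    congr 1
    rw [ContinuousLinearMap.sum_apply, map_sum]
    refine Finset.sum_congr rfl fun k _ => ?_
    rw [ContinuousLinearMap.smul_apply, map_smul]
  -- limit along the full sequence
  have hfull : Filter.Tendsto (fun K => crea (u K)) Filter.atTop
      (nhds (crea (exp X f) - S)) := by
    simp_rw [hcu]
    exact (tendsto_const_nhds).sub hS.hasSum.tendsto_sum_nat
  obtain ⟨φ, hφmono, hφ0⟩ := fock_absorb crea dΓ hcomm u hu0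
  have hsub : Filter.Tendsto (fun j => crea (u (φ j))) Filter.atTop
      (nhds (crea (exp X f) - S)) := hfull.comp hφmono.tendsto_atTop
  have := tendsto_nhds_unique hsub hφ0
  have h5 : crea (exp X f) = S := by
    have := sub_eq_zero.mp this
    exact this
  exact h5.symm

lemma fock_exp_crea_comm
    (hcomm : ∀ (X : H →L[ℂ] H) (f : H), dΓ X * crea f - crea f * dΓ X = crea (X f))
    (X : H →L[ℂ] H) (f : H) :
    exp (dΓ X) * crea f = crea (exp X f) * exp (dΓ X) := by
  have h := fock_crea_exp crea dΓ hcomm X f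
  have hinv : exp (-(dΓ X)) * exp (dΓ X) = 1 := by
    letI : NormedAlgebra ℚ (F →L[ℂ] F) := NormedAlgebra.restrictScalars ℚ ℂ (F →L[ℂ] F)
    rw [← exp_add_of_commute (Commute.refl (dΓ X)).neg_left]
    simp
  calc exp (dΓ X) * crea f
      = exp (dΓ X) * crea f * (exp (-(dΓ X)) * exp (dΓ X)) := by rw [hinv, mul_one]
    _ = (exp (dΓ X) * crea f * exp (-(dΓ X))) * exp (dΓ X) := by
        rw [← mul_assoc]
    _ = crea (exp X f) * exp (dΓ X) := by rw [h]

lemma fock_exp_vacuum (Ω : F) (X : H →L[ℂ] H) (hvac : (dΓ X) Ω = 0) :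
    exp (dΓ X) Ω = Ω := by
  have h0 : exp (dΓ X) Ω = (ContinuousLinearMap.apply ℂ F Ω)
      (∑' (n : ℕ), ((n.factorial : ℂ))⁻¹ • (dΓ X) ^ n) := by
    simp only [exp_eq_tsum ℂ]; rfl
  rw [h0, ContinuousLinearMap.map_tsum _ (expSeries_summable' (𝕂 := ℂ) (dΓ X))]
  have hterm : ∀ n : ℕ, (ContinuousLinearMap.apply ℂ F Ω) (((n.factorial : ℂ))⁻¹ • (dΓ X) ^ n)
      = if n = 0 then Ω else 0 := by
    intro n
    cases n with
    | zero => simp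
    | succ m =>
      have : ((dΓ X) ^ (m+1)) Ω = 0 := by
        rw [pow_succ]
        have : ((dΓ X) ^ m * dΓ X) Ω = ((dΓ X) ^ m) ((dΓ X) Ω) := rfl
        rw [this, hvac, map_zero]
      simp [this]
  rw [tsum_congr hterm, tsum_eq_single 0 (fun n hn => by simp [hn])]
  simp

lemma fock_intertwine_prod (Ω : F) (W : F →L[ℂ] F) (S : H →L[ℂ] H)
    (hΩ : W Ω = Ω) (hint : ∀ f, W * crea f = crea (S f) * W) :
    ∀ (n : ℕ) (f : Fin n → H),
      W (((List.ofFn fun i => crea (f i)).prod) Ω)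
        = ((List.ofFn fun i => crea (S (f i))).prod) Ω := by
  intro n
  induction n with
  | zero => intro f; simpa using hΩ
  | succ m ih =>
    intro f
    rw [List.ofFn_succ, List.ofFn_succ, List.prod_cons, List.prod_cons]
    have h1 : (crea (f 0) * (List.ofFn fun i => crea (f i.succ)).prod) Ω
        = crea (f 0) (((List.ofFn fun i => crea (f i.succ)).prod) Ω) := rfl
    have h2 : (crea (S (f 0)) * (List.ofFn fun i => crea (S (f i.succ))).prod) Ω
        = crea (S (f 0)) (((List.ofFn fun i => crea (S (f i.succ))).prod) Ω) := rfl
    rw [h1, h2, ← ih (fun i => f i.succ)]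
    have h3 := congrArg (fun (T : F →L[ℂ] F) =>
      T (((List.ofFn fun i => crea (f i.succ)).prod) Ω)) (hint (f 0))
    simpa using h3

lemma fock_comp_intertwine (W1 W2 : F →L[ℂ] F) (S1 S2 : H →L[ℂ] H)
    (h1 : ∀ f, W1 * crea f = crea (S1 f) * W1)
    (h2 : ∀ f, W2 * crea f = crea (S2 f) * W2) :
    ∀ f, (W1 * W2) * crea f = crea (S1 (S2 f)) * (W1 * W2) := by
  intro f
  calc (W1 * W2) * crea f = W1 * (W2 * crea f) := by rw [mul_assoc]
    _ = W1 * (crea (S2 f) * W2) := by rw [h2]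
    _ = (W1 * crea (S2 f)) * W2 := by rw [mul_assoc]
    _ = (crea (S1 (S2 f)) * W1) * W2 := by rw [h1]
    _ = crea (S1 (S2 f)) * (W1 * W2) := by rw [mul_assoc]

end Fock2

open NormedSpace

/-- **Exponential product identity for quadratic Fock-space forms.**
Let `F` be (bosonic or fermionic) Fock space over the one-particle space `H`,
with creation operators `crea f = a(f)†`, cyclic vacuum `Ω`, and second
quantization `dΓ` characterized by `dΓ(X)Ω = 0` and `[dΓ(X), a(f)†] = a(Xf)†`.
For self-adjoint (bounded) `A`, `B` there is a self-adjoint `C` with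
`e^A e^B e^A = e^C` and correspondingly
`e^{dΓ(A)} e^{dΓ(B)} e^{dΓ(A)} = e^{dΓ(C)}`. -/
theorem exp_product_identity_second_quantization
    {H : Type*} [NormedAddCommGroup H] [InnerProductSpace ℂ H] [CompleteSpace H]
    {F : Type*} [NormedAddCommGroup F] [InnerProductSpace ℂ F] [CompleteSpace F]
    (crea : H →ₗ[ℂ] (F →L[ℂ] F)) (Ω : F) (hΩ : Ω ≠ 0)
    (hcyclic : Dense (Submodule.span ℂ
      {v : F | ∃ (n : ℕ) (f : Fin n → H),
        v = ((List.ofFn fun i => crea (f i)).prod) Ω} : Set F))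
    (dΓ : (H →L[ℂ] H) →ₗ[ℂ] (F →L[ℂ] F))
    (hvac : ∀ X : H →L[ℂ] H, (dΓ X) Ω = 0)
    (hcomm : ∀ (X : H →L[ℂ] H) (f : H),
      dΓ X * crea f - crea f * dΓ X = crea (X f))
    (A B : H →L[ℂ] H) (hA : IsSelfAdjoint A) (hB : IsSelfAdjoint B) :
    ∃ C : H →L[ℂ] H, IsSelfAdjoint C ∧
      exp A * exp B * exp A = exp C ∧
      exp (dΓ A) * exp (dΓ B) * exp (dΓ A) = exp (dΓ C) := by
  -- Construction of C via the continuous functional calculus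
  set P := exp A * exp B * exp A with hP
  have hexpA : IsSelfAdjoint (exp A) := by
    rw [IsSelfAdjoint, star_exp, hA.star_eq]
  have hBnn : (0 : H →L[ℂ] H) ≤ exp B := hB.exp_nonneg
  have hPnn : (0 : H →L[ℂ] H) ≤ P := by
    have := star_left_conjugate_nonneg hBnn (exp A)
    rwa [hexpA.star_eq] at this
  have hPsa : IsSelfAdjoint P := IsSelfAdjoint.of_nonneg hPnn
  letI : NormedAlgebra ℚ (H →L[ℂ] H) := NormedAlgebra.restrictScalars ℚ ℂ (H →L[ℂ] H)
  have hPunit : IsUnit P := ((isUnit_exp A).mul (isUnit_exp B)).mul (isUnit_exp A)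
  have hspec : ∀ x ∈ spectrum ℝ P, 0 < x := by
    intro x hx
    have h1 : 0 ≤ x := spectrum_nonneg_of_nonneg hPnn hx
    have h2 : x ≠ 0 := by
      intro h; subst h
      exact spectrum.zero_notMem ℝ hPunit hx
    exact lt_of_le_of_ne h1 (Ne.symm h2)
  refine ⟨CFC.log P, IsSelfAdjoint.log, ?_, ?_⟩
  case _ =>
    have key : exp (CFC.log P) = P := by
      exact CFC.exp_log P (hPunit.isStrictlyPositive hPnn)
    exact key.symm
  -- The Fock space identity
  have key : exp (CFC.log P) = P := by
    exact CFC.exp_log P (hPunit.isStrictlyPositive hPnn)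
  set C := CFC.log P with hCdef
  set W : F →L[ℂ] F := exp (dΓ A) * exp (dΓ B) * exp (dΓ A) with hW
  set W' : F →L[ℂ] F := exp (dΓ C) with hW'
  -- intertwining relations
  have hintA := fock_exp_crea_comm crea dΓ hcomm A
  have hintB := fock_exp_crea_comm crea dΓ hcomm B
  have hintC := fock_exp_crea_comm crea dΓ hcomm C
  have hintW : ∀ f, W * crea f = crea (exp C f) * W := by
    intro f
    have h1 := fock_comp_intertwine crea (exp (dΓ B)) (exp (dΓ A))
      (exp B) (exp A) hintB hintA
    have h2 := fock_comp_intertwine crea (exp (dΓ A))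
      (exp (dΓ B) * exp (dΓ A)) (exp A)
      (exp B * exp A) hintA ?_
    · have h3 := h2 f
      rw [← mul_assoc] at h3
      rw [hW]
      have h4 : exp A ((exp B * exp A) f) = exp C f := by
        have : exp A ((exp B * exp A) f) = (exp A * (exp B * exp A)) f := rfl
        rw [this, ← mul_assoc, ← hP, ← key]
      rw [← h4]
      exact h3
    · intro g
      have := h1 g
      have h5 : exp B (exp A g) = (exp B * exp A) g := rfl
      rwa [h5] at this
  have hintW' : ∀ f, W' * crea f = crea (exp C f) * W' := hintC
  -- vacuum
  have hWΩ : W Ω = Ω := by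
    have h1 : W Ω = exp (dΓ A) (exp (dΓ B) (exp (dΓ A) Ω)) := rfl
    rw [h1, fock_exp_vacuum dΓ Ω A (hvac A), fock_exp_vacuum dΓ Ω B (hvac B),
      fock_exp_vacuum dΓ Ω A (hvac A)]
  have hW'Ω : W' Ω = Ω := fock_exp_vacuum dΓ Ω C (hvac C)
  -- conclude by density
  have : W = W' := by
    apply ContinuousLinearMap.ext_on hcyclic
    rintro v ⟨n, fs, rfl⟩
    rw [fock_intertwine_prod crea Ω W (exp C) hWΩ hintW n fs,
      fock_intertwine_prod crea Ω W' (exp C) hW'Ω hintW' n fs]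
  exact this
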